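/- Let G be a finite group, K a field, M a KG-module with G-invariant bilinear form, and suppose e ∈ M generates a submodule S = KG·e. If for every submodule V of M, either e ∈ V or V ⊆ S^⊥, then S ∩ S^⊥ is the unique maximal proper submodule of S, provided S ⊄ S^⊥. -/

import Mathlib

open MonoidAlgebra

/-- If every submodule `V` of `M` either contains `e` or is contained in `S^⊥`
(where `S = KG·e`), and `S ⊄ S^⊥`, then `S ∩ S^⊥` is the unique maximal proper
submodule of `S`. -/
theorem unique_maximal_submodule (K : Type*) [Field K] (G : Type*) [Group G] [Fintype G]
    (M : Type*) [AddCommGroup M] [Module K M] [Module (MonoidAlgebra K G) M]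
    [IsScalarTower K (MonoidAlgebra K G) M]
    (B : M →ₗ[K] M →ₗ[K] K)
    (hB : ∀ (g : G) (v w : M),
      B ((MonoidAlgebra.of K G g) • v) ((MonoidAlgebra.of K G g) • w) = B v w)
    (e : M)
    (S : Submodule (MonoidAlgebra K G) M)
    (hS : S = Submodule.span (MonoidAlgebra K G) {e})
    (hsub : ∀ V : Submodule (MonoidAlgebra K G) M,
      e ∈ V ∨ ∀ v ∈ V, ∀ s ∈ S, B v s = 0)
    (hnp : ¬ ∀ s ∈ S, ∀ s' ∈ S, B s s' = 0) :
    ∃ N : Submodule (MonoidAlgebra K G) M,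
      (∀ x : M, x ∈ N ↔ x ∈ S ∧ ∀ s ∈ S, B x s = 0) ∧
      N < S ∧
      ∀ V : Submodule (MonoidAlgebra K G) M, V < S → V ≤ N := by
  -- closure of the perp condition under scalar multiplication
  have key : ∀ (r : MonoidAlgebra K G) (x : M), (∀ s ∈ S, B x s = 0) →
      ∀ s ∈ S, B (r • x) s = 0 := by
    intro r x hx
    induction r using MonoidAlgebra.induction_on with
    | of g =>
        intro s hs
        have h1 : (MonoidAlgebra.of K G g⁻¹) • s ∈ S := S.smul_mem _ hs
        have h2 := hB g x ((MonoidAlgebra.of K G g⁻¹) • s)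
        have h3 : (MonoidAlgebra.of K G g) • (MonoidAlgebra.of K G g⁻¹) • s = s := by
          rw [smul_smul, ← map_mul, mul_inv_cancel, map_one, one_smul]
        rw [h3] at h2
        rw [h2]
        exact hx _ h1
    | add f g hf hg =>
        intro s hs
        rw [add_smul]
        simp [hf s hs, hg s hs]
    | smul c f hf =>
        intro s hs
        rw [smul_assoc]
        have : B (c • f • x) s = c * B (f • x) s := by simp
        rw [this, hf s hs, mul_zero]
  let N : Submodule (MonoidAlgebra K G) M :=
    { carrier := {x | x ∈ S ∧ ∀ s ∈ S, B x s = 0}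
      add_mem' := by
        rintro a b ⟨haS, ha⟩ ⟨hbS, hb⟩
        exact ⟨S.add_mem haS hbS, fun s hs => by simp [ha s hs, hb s hs]⟩
      zero_mem' := ⟨S.zero_mem, fun s hs => by simp⟩
      smul_mem' := by
        rintro r a ⟨haS, ha⟩
        exact ⟨S.smul_mem r haS, key r a ha⟩ }
  have hNmem : ∀ x : M, x ∈ N ↔ x ∈ S ∧ ∀ s ∈ S, B x s = 0 := fun x => Iff.rfl
  refine ⟨N, hNmem, ?_, ?_⟩
  · refine lt_of_le_of_ne (fun x hx => hx.1) ?_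
    intro hNS
    apply hnp
    intro s hs s' hs'
    rw [← hNS] at hs
    exact hs.2 s' hs'
  · intro V hV
    rcases hsub V with he | hperp
    · exfalso
      have : S ≤ V := by
        rw [hS]
        exact Submodule.span_le.mpr (by simpa using he)
      exact absurd (le_antisymm hV.le this) hV.ne
    · intro v hv
      exact ⟨hV.le hv, hperp v hv⟩
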